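/- arXiv:2011.09643 — 2 statements merged into one kernel-verified Lean document; each statement's English description precedes it below -/
import Mathlib

section
/- With g as above and c = 1/2, one step of gradient descent from f₀ with learning rate 1 yields f₀ - ∇g(f₀) = (I - L)·f₀. In particular, if L = I - P for some matrix P, then the result equals P·f₀. -/
open Matrix

section aux

variable {n : ℕ}

lemma aux_inner_eq (L : Matrix (Fin n) (Fin n) ℝ) (x y : EuclideanSpace ℝ (Fin n)) :
    inner ℝ x ((LinearMap.toContinuousLinearMap (Matrix.toEuclideanLin L)) y)
      = (x : Fin n → ℝ) ⬝ᵥ L.mulVec (y : Fin n → ℝ) := by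
  simp [PiLp.inner_apply, Matrix.toEuclideanLin_apply, dotProduct, Matrix.mulVec,
    RCLike.inner_apply, mul_comm]

lemma aux_hasGradientAt (L : Matrix (Fin n) (Fin n) ℝ) (hL : L.IsSymm)
    (f₀ : EuclideanSpace ℝ (Fin n)) :
    HasGradientAt (fun f : EuclideanSpace ℝ (Fin n) =>
        ‖f - f₀‖ ^ 2 + (1 / 2 : ℝ) * ((f : Fin n → ℝ) ⬝ᵥ L.mulVec (f : Fin n → ℝ))) 
      ((LinearMap.toContinuousLinearMap (Matrix.toEuclideanLin L)) f₀) f₀ := by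
  set T := LinearMap.toContinuousLinearMap (Matrix.toEuclideanLin L) with hT
  have key : ∀ f : EuclideanSpace ℝ (Fin n),
      ‖f - f₀‖ ^ 2 + (1 / 2 : ℝ) * ((f : Fin n → ℝ) ⬝ᵥ L.mulVec (f : Fin n → ℝ))
        = inner ℝ (f - f₀) (f - f₀) + (1 / 2 : ℝ) * inner ℝ f (T f) := by
    intro f
    rw [real_inner_self_eq_norm_sq, aux_inner_eq]
  have h1 : HasFDerivAt (fun f : EuclideanSpace ℝ (Fin n) => (inner ℝ (f - f₀) (f - f₀) : ℝ))
      ((fderivInnerCLM ℝ (f₀ - f₀, f₀ - f₀)).comp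
        ((ContinuousLinearMap.id ℝ _).prod (ContinuousLinearMap.id ℝ _))) f₀ :=
    HasFDerivAt.inner ℝ ((hasFDerivAt_id f₀).sub_const f₀) ((hasFDerivAt_id f₀).sub_const f₀)
  have h2 : HasFDerivAt (fun f : EuclideanSpace ℝ (Fin n) => (inner ℝ f (T f) : ℝ))
      ((fderivInnerCLM ℝ (f₀, T f₀)).comp ((ContinuousLinearMap.id ℝ _).prod T)) f₀ :=
    HasFDerivAt.inner ℝ (hasFDerivAt_id f₀) (T.hasFDerivAt)
  have h3 := h1.add (h2.const_mul (1 / 2 : ℝ))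
  have h4 : HasFDerivAt (fun f : EuclideanSpace ℝ (Fin n) =>
      ‖f - f₀‖ ^ 2 + (1 / 2 : ℝ) * ((f : Fin n → ℝ) ⬝ᵥ L.mulVec (f : Fin n → ℝ)))
      (((fderivInnerCLM ℝ (f₀ - f₀, f₀ - f₀)).comp
        ((ContinuousLinearMap.id ℝ _).prod (ContinuousLinearMap.id ℝ _))) +
       (1 / 2 : ℝ) • ((fderivInnerCLM ℝ (f₀, T f₀)).comp
        ((ContinuousLinearMap.id ℝ _).prod T))) f₀ := by
    exact h3.congr_of_eventuallyEq (Filter.Eventually.of_forall key)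
  have hsym : ∀ v : EuclideanSpace ℝ (Fin n), (inner ℝ f₀ (T v) : ℝ) = inner ℝ (T f₀) v := by
    intro v
    rw [aux_inner_eq, real_inner_comm, aux_inner_eq, Matrix.dotProduct_mulVec, ← hL.eq,
      Matrix.vecMul_transpose, dotProduct_comm, hL.eq]
  have heq : (((fderivInnerCLM ℝ (f₀ - f₀, f₀ - f₀)).comp
        ((ContinuousLinearMap.id ℝ _).prod (ContinuousLinearMap.id ℝ _))) +
       (1 / 2 : ℝ) • ((fderivInnerCLM ℝ (f₀, T f₀)).comp
        ((ContinuousLinearMap.id ℝ _).prod T)))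
      = InnerProductSpace.toDual ℝ (EuclideanSpace ℝ (Fin n)) (T f₀) := by
    ext v
    simp only [ContinuousLinearMap.add_apply, ContinuousLinearMap.coe_comp', Function.comp_apply,
      ContinuousLinearMap.smul_apply, ContinuousLinearMap.prod_apply, ContinuousLinearMap.coe_id',
      id_eq, fderivInnerCLM_apply, InnerProductSpace.toDual_apply_apply, smul_eq_mul, sub_self,
      inner_zero_left, inner_zero_right, add_zero, zero_add]
    rw [hsym v, real_inner_comm v (T f₀)]
    ring
  rw [heq] at h4
  exact (hasGradientAt_iff_hasFDerivAt).mpr h4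

end aux

/-- With `g(f) = ‖f - f₀‖² + c·fᵀLf`, `c = 1/2`, one gradient-descent step
from `f₀` with learning rate 1 gives `f₀ - ∇g(f₀) = (I - L)f₀`; and if `L = I - P`,
the result is `P·f₀` (the GCN convolution). -/
theorem one_step_gradient_descent {n : ℕ} (L P : Matrix (Fin n) (Fin n) ℝ)
    (hL : L.IsSymm) (hP : L = 1 - P) (f₀ : EuclideanSpace ℝ (Fin n)) :
    f₀ - gradient (fun f : EuclideanSpace ℝ (Fin n) =>
        ‖f - f₀‖ ^ 2 + (1 / 2 : ℝ) * ((f : Fin n → ℝ) ⬝ᵥ L.mulVec (f : Fin n → ℝ))) f₀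
      = (EuclideanSpace.equiv (Fin n) ℝ).symm (((1 : Matrix (Fin n) (Fin n) ℝ) - L).mulVec (f₀ : Fin n → ℝ))
    ∧ f₀ - gradient (fun f : EuclideanSpace ℝ (Fin n) =>
        ‖f - f₀‖ ^ 2 + (1 / 2 : ℝ) * ((f : Fin n → ℝ) ⬝ᵥ L.mulVec (f : Fin n → ℝ))) f₀
      = (EuclideanSpace.equiv (Fin n) ℝ).symm (P.mulVec (f₀ : Fin n → ℝ)) := by
  have hg := (aux_hasGradientAt L hL f₀).gradient
  have hmain : f₀ - gradient (fun f : EuclideanSpace ℝ (Fin n) =>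
        ‖f - f₀‖ ^ 2 + (1 / 2 : ℝ) * ((f : Fin n → ℝ) ⬝ᵥ L.mulVec (f : Fin n → ℝ))) f₀
      = (EuclideanSpace.equiv (Fin n) ℝ).symm (((1 : Matrix (Fin n) (Fin n) ℝ) - L).mulVec (f₀ : Fin n → ℝ)) := by
    rw [hg]
    apply PiLp.ext
    intro i
    simp [Matrix.sub_mulVec, Matrix.one_mulVec, Matrix.toEuclideanLin_apply]
  refine ⟨hmain, ?_⟩
  rw [hmain]
  congr 1
  rw [hP]
  simp [sub_sub_cancel]
end

section
/- Repeated application of the GCN smoothing operator converges: if P = D̃^{-1/2}ÃD̃^{-1/2} where Ã corresponds to a connected graph with self-loops, then P^k f₀ converges as k → ∞ to the projection of f₀ onto the span of u, where u_i = √(1+d_i). (Over-smoothing: the limit representation is the same up to the factor √(1+d_i) for all nodes.) -/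
open Matrix Filter

/-- over-smoothing: For the GCN operator `P = D̃^{-1/2} Ã D̃^{-1/2}` of a
connected graph with self-loops, `P^k f₀` converges as `k → ∞` to the projection of
`f₀` onto the span of `u`, where `u_i = √(1+d_i)`. -/
theorem oversmoothing_convergence {n : ℕ} (A : Matrix (Fin n) (Fin n) ℝ)
    (hA : A.IsSymm) (h01 : ∀ i j, A i j = 0 ∨ A i j = 1)
    (hconn : ∀ i j : Fin n, Relation.ReflTransGen (fun a b => A a b = 1) i j)
    (d : Fin n → ℝ) (hd : ∀ i, d i = ∑ j, A i j)
    (P : Matrix (Fin n) (Fin n) ℝ)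
    (hP : P = Matrix.diagonal (fun i => 1 / Real.sqrt (1 + d i)) * (A + 1)
              * Matrix.diagonal (fun i => 1 / Real.sqrt (1 + d i)))
    (u : Fin n → ℝ) (hu : ∀ i, u i = Real.sqrt (1 + d i)) (f₀ : Fin n → ℝ) :
    Tendsto (fun k : ℕ => (P ^ k).mulVec f₀) atTop
      (nhds (((u ⬝ᵥ f₀) / (u ⬝ᵥ u)) • u)) := by
  classical
  rcases Nat.eq_zero_or_pos n with hn | hn
  · subst hn
    have h0 : (fun k : ℕ => (P ^ k).mulVec f₀) = fun _ => ((u ⬝ᵥ f₀) / (u ⬝ᵥ u)) • u := by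
      funext k; funext j; exact absurd j.2 (by omega)
    rw [h0]; exact tendsto_const_nhds
  set s : Fin n → ℝ := fun i => Real.sqrt (1 + d i) with hs_def
  have hdnn : ∀ i, (0:ℝ) ≤ d i := by
    intro i; rw [hd i]
    exact Finset.sum_nonneg fun j _ => by rcases h01 i j with h | h <;> simp [h]
  have hpos : ∀ i, (0:ℝ) < 1 + d i := fun i => by linarith [hdnn i]
  have hspos : ∀ i, 0 < s i := fun i => Real.sqrt_pos.2 (hpos i)
  have hssq : ∀ i, s i * s i = 1 + d i := fun i => Real.mul_self_sqrt (hpos i).le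
  have hus : ∀ i, u i = s i := fun i => hu i
  set B : Matrix (Fin n) (Fin n) ℝ := A + 1 with hB_def
  have hBapp : ∀ i j, B i j = A i j + if i = j then 1 else 0 := by
    intro i j; simp [hB_def, Matrix.one_apply]
  have hBnn : ∀ i j, 0 ≤ B i j := by
    intro i j; rw [hBapp]
    rcases h01 i j with h | h <;> rw [h] <;> positivity
  have hBsymm : ∀ i j, B i j = B j i := by
    intro i j; rw [hBapp, hBapp]
    have : A i j = A j i := by
      conv_lhs => rw [← hA]
      rfl
    rw [this]
    by_cases h : i = j <;> simp [h, eq_comm]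
  have hBrow : ∀ i, ∑ j, B i j = 1 + d i := by
    intro i
    simp only [hBapp]
    rw [Finset.sum_add_distrib, ← hd i]
    simp [add_comm]
  have hBdiag : ∀ i, 1 ≤ B i i := by
    intro i; rw [hBapp]; simp
    rcases h01 i i with h | h <;> rw [h] <;> norm_num
  have hBedge : ∀ i j, A i j = 1 → 1 ≤ B i j := by
    intro i j h; rw [hBapp, h]
    split <;> norm_num
  have hPij : ∀ i j, P i j = B i j / (s i * s j) := by
    intro i j
    rw [hP, Matrix.mul_diagonal, Matrix.diagonal_mul]
    have h1 : s i ≠ 0 := (hspos i).ne'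
    have h2 : s j ≠ 0 := (hspos j).ne'
    field_simp
    rw [mul_assoc]; exact mul_div_cancel_right₀ _ (mul_ne_zero h1 h2)
  have hPsym : ∀ i j, P i j = P j i := by
    intro i j; rw [hPij, hPij, hBsymm i j, mul_comm (s i)]
  have hPu : P *ᵥ u = u := by
    funext i
    have : ∀ j, P i j * u j = B i j / s i := by
      intro j
      rw [hPij, hus j]
      have h1 : s i ≠ 0 := (hspos i).ne'
      have h2 : s j ≠ 0 := (hspos j).ne'
      field_simp
    calc (P *ᵥ u) i = ∑ j, P i j * u j := rfl
      _ = ∑ j, B i j / s i := Finset.sum_congr rfl fun j _ => this j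
      _ = (∑ j, B i j) / s i := by rw [Finset.sum_div]
      _ = (1 + d i) / s i := by rw [hBrow i]
      _ = u i := by
          rw [hus i, ← hssq i]
          field_simp
  have hsymdot : ∀ x y : Fin n → ℝ, (P *ᵥ x) ⬝ᵥ y = x ⬝ᵥ (P *ᵥ y) := by
    intro x y
    simp only [dotProduct, mulVec, dotProduct, Finset.sum_mul, Finset.mul_sum]
    rw [Finset.sum_comm]
    refine Finset.sum_congr rfl fun i _ => Finset.sum_congr rfl fun j _ => ?_
    rw [hPsym j i]
    ring
  have key : ∀ (μ : ℝ) (v : Fin n → ℝ), P *ᵥ v = μ • v → v ≠ 0 →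
      (-1 < μ ∧ μ ≤ 1) ∧ (μ = 1 → ∃ t : ℝ, t ≠ 0 ∧ ∀ i, v i = t * u i) := by
    intro μ v hv hv0
    set x : Fin n → ℝ := fun i => v i / s i with hx_def
    have hvx : ∀ i, v i = s i * x i := by
      intro i
      have : s i ≠ 0 := (hspos i).ne'
      field_simp [hx_def]
      exact (mul_div_cancel₀ (v i) this).symm
    have hQ : v ⬝ᵥ (P *ᵥ v) = ∑ i, ∑ j, B i j * (x i * x j) := by
      simp only [dotProduct, mulVec, dotProduct, Finset.mul_sum]
      refine Finset.sum_congr rfl fun i _ => Finset.sum_congr rfl fun j _ => ?_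
      rw [hPij, hvx i, hvx j]
      have h1 : s i ≠ 0 := (hspos i).ne'
      have h2 : s j ≠ 0 := (hspos j).ne'
      field_simp
    have hN : v ⬝ᵥ v = ∑ i, (1 + d i) * (x i * x i) := by
      refine Finset.sum_congr rfl fun i _ => ?_
      rw [hvx i, ← hssq i]
      ring
    have hQN : v ⬝ᵥ (P *ᵥ v) = μ * (v ⬝ᵥ v) := by
      rw [hv, dotProduct_smul]
      rfl
    have hS1 : ∑ i, ∑ j, B i j * (x i * x i) = v ⬝ᵥ v := by
      rw [hN]
      refine Finset.sum_congr rfl fun i _ => ?_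
      rw [← Finset.sum_mul, hBrow i]
    have hS2 : ∑ i, ∑ j, B i j * (x j * x j) = v ⬝ᵥ v := by
      rw [Finset.sum_comm, hN]
      refine Finset.sum_congr rfl fun j _ => ?_
      rw [← Finset.sum_mul]
      congr 1
      rw [← hBrow j]
      exact Finset.sum_congr rfl fun i _ => hBsymm i j
    have hE1 : ∑ i, ∑ j, B i j * ((x i - x j) * (x i - x j))
        = 2 * (v ⬝ᵥ v) - 2 * (v ⬝ᵥ (P *ᵥ v)) := by
      have expand : ∀ i j : Fin n, B i j * ((x i - x j) * (x i - x j))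
          = B i j * (x i * x i) + B i j * (x j * x j) - 2 * (B i j * (x i * x j)) := by
        intro i j; ring
      simp only [expand, Finset.sum_add_distrib, Finset.sum_sub_distrib, ← Finset.mul_sum]
      rw [hS1, hS2, hQ]
      ring
    have hE2 : ∑ i, ∑ j, B i j * ((x i + x j) * (x i + x j))
        = 2 * (v ⬝ᵥ v) + 2 * (v ⬝ᵥ (P *ᵥ v)) := by
      have expand : ∀ i j : Fin n, B i j * ((x i + x j) * (x i + x j))
          = B i j * (x i * x i) + B i j * (x j * x j) + 2 * (B i j * (x i * x j)) := by
        intro i j; ring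
      simp only [expand, Finset.sum_add_distrib, ← Finset.mul_sum]
      rw [hS1, hS2, hQ]
      ring
    have hTnn1 : ∀ i j : Fin n, 0 ≤ B i j * ((x i - x j) * (x i - x j)) :=
      fun i j => mul_nonneg (hBnn i j) (mul_self_nonneg _)
    have hTnn2 : ∀ i j : Fin n, 0 ≤ B i j * ((x i + x j) * (x i + x j)) :=
      fun i j => mul_nonneg (hBnn i j) (mul_self_nonneg _)
    obtain ⟨i0, hi0'⟩ := Function.ne_iff.1 hv0
    have hi0 : v i0 ≠ 0 := by simpa using hi0'
    have hNpos : 0 < v ⬝ᵥ v := by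
      have h1 : 0 < v i0 * v i0 := mul_self_pos.2 hi0
      have h2 : v i0 * v i0 ≤ ∑ i, v i * v i :=
        Finset.single_le_sum (fun i _ => mul_self_nonneg (v i)) (Finset.mem_univ i0)
      calc (0:ℝ) < v i0 * v i0 := h1
        _ ≤ ∑ i, v i * v i := h2
        _ = v ⬝ᵥ v := rfl
    have hx0 : x i0 ≠ 0 := by
      intro h
      exact hi0 (by rw [hvx i0, h, mul_zero])
    have hμle : μ ≤ 1 := by
      have h1 : 0 ≤ ∑ i, ∑ j, B i j * ((x i - x j) * (x i - x j)) :=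
        Finset.sum_nonneg fun i _ => Finset.sum_nonneg fun j _ => hTnn1 i j
      rw [hE1, hQN] at h1
      nlinarith
    have hμgt : -1 < μ := by
      have hdpos : 0 < B i0 i0 * ((x i0 + x i0) * (x i0 + x i0)) := by
        have h1 := hBdiag i0
        have h2 : 0 < x i0 * x i0 := mul_self_pos.2 hx0
        nlinarith
      have hstep1 : B i0 i0 * ((x i0 + x i0) * (x i0 + x i0))
          ≤ ∑ j, B i0 j * ((x i0 + x j) * (x i0 + x j)) :=
        Finset.single_le_sum (fun j _ => hTnn2 i0 j) (Finset.mem_univ i0)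
      have hstep2 : ∑ j, B i0 j * ((x i0 + x j) * (x i0 + x j))
          ≤ ∑ i, ∑ j, B i j * ((x i + x j) * (x i + x j)) :=
        Finset.single_le_sum (fun i _ => Finset.sum_nonneg fun j _ => hTnn2 i j)
          (Finset.mem_univ i0)
      have h3 : 0 < ∑ i, ∑ j, B i j * ((x i + x j) * (x i + x j)) :=
        lt_of_lt_of_le hdpos (le_trans hstep1 hstep2)
      rw [hE2, hQN] at h3
      nlinarith
    refine ⟨⟨hμgt, hμle⟩, ?_⟩
    intro hμ1
    have hzero : ∑ i, ∑ j, B i j * ((x i - x j) * (x i - x j)) = 0 := by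
      rw [hE1, hQN, hμ1]
      ring
    have hterm : ∀ i j : Fin n, B i j * ((x i - x j) * (x i - x j)) = 0 := by
      intro i j
      have houter := (Finset.sum_eq_zero_iff_of_nonneg
        (fun i _ => Finset.sum_nonneg fun j _ => hTnn1 i j)).1 hzero i (Finset.mem_univ i)
      exact (Finset.sum_eq_zero_iff_of_nonneg fun j _ => hTnn1 i j).1 houter j
        (Finset.mem_univ j)
    have hedge : ∀ i j : Fin n, A i j = 1 → x i = x j := by
      intro i j hij
      have h1 := hBedge i j hij
      have h2 := hterm i j
      have h3 : (x i - x j) * (x i - x j) = 0 := by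
        rcases mul_eq_zero.1 h2 with h | h
        · linarith
        · exact h
      have := mul_self_eq_zero.1 h3
      linarith
    have hconst : ∀ i j : Fin n, x i = x j := by
      intro i j
      induction hconn i j with
      | refl => rfl
      | tail hab hbc ih => exact ih.trans (hedge _ _ hbc)
    exact ⟨x i0, hx0, fun i => by rw [hvx i, hconst i i0, hus i]; ring⟩
  -- spectral decomposition
  have hPisSymm : P.IsSymm := Matrix.ext fun i j => by
    rw [Matrix.transpose_apply, hPsym j i]
  have hHerm : P.IsHermitian := hPisSymm
  set b := hHerm.eigenvectorBasis with hb_def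
  set μ := hHerm.eigenvalues with hμ_def
  have heig : ∀ i, P *ᵥ ⇑(b i) = μ i • ⇑(b i) := fun i => hHerm.mulVec_eigenvectorBasis i
  have hbne : ∀ i, ⇑(b i) ≠ (0 : Fin n → ℝ) := by
    intro i h
    exact b.orthonormal.ne_zero i (by ext j; exact congrFun h j)
  have hbdot : ∀ i j, i ≠ j → ⇑(b i) ⬝ᵥ ⇑(b j) = 0 := by
    intro i j hij
    have h1 := b.orthonormal.2 hij
    simpa [PiLp.inner_apply, dotProduct, mul_comm] using h1
  have hbdot1 : ∀ i, ⇑(b i) ⬝ᵥ ⇑(b i) = 1 := by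
    intro i
    have h2 := b.orthonormal.1 i
    have h3 := real_inner_self_eq_norm_sq (b i)
    rw [h2] at h3
    have h4 : (inner ℝ (b i) (b i) : ℝ) = 1 := by rw [h3]; norm_num
    rw [PiLp.inner_apply] at h4
    simpa [dotProduct, ← pow_two] using h4
  have hbounds : ∀ i, μ i ≠ 1 → |μ i| < 1 := by
    intro i hne
    obtain ⟨⟨hgt, hle⟩, -⟩ := key (μ i) ⇑(b i) (heig i) (hbne i)
    rw [abs_lt]
    exact ⟨hgt, lt_of_le_of_ne hle hne⟩
  have hmult : ∀ i, μ i = 1 → ∃ t : ℝ, t ≠ 0 ∧ ∀ j, b i j = t * u j := by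
    intro i h1
    obtain ⟨-, h2⟩ := key (μ i) ⇑(b i) (heig i) (hbne i)
    exact h2 h1
  have hpowb : ∀ (i : Fin n) (k : ℕ), (P ^ k) *ᵥ ⇑(b i) = (μ i) ^ k • ⇑(b i) := by
    intro i k
    induction k with
    | zero => simp [Matrix.one_mulVec]
    | succ k ih =>
        rw [pow_succ, ← Matrix.mulVec_mulVec, heig i, Matrix.mulVec_smul, ih,
          smul_smul, pow_succ]
        ring_nf
  set F : EuclideanSpace ℝ (Fin n) := (WithLp.equiv 2 (Fin n → ℝ)).symm f₀ with hF_def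
  set c : Fin n → ℝ := fun i => b.repr F i with hc_def
  have hrepr : f₀ = ∑ i, c i • ⇑(b i) := by
    have h : (⇑F : Fin n → ℝ) = ∑ i, c i • ⇑(b i) := by
      conv_lhs => rw [← b.sum_repr F]
      rw [WithLp.ofLp_sum]; rfl
    exact h
  have hPk : ∀ k : ℕ, (P ^ k) *ᵥ f₀ = ∑ i, ((μ i) ^ k * c i) • ⇑(b i) := by
    intro k
    calc (P ^ k) *ᵥ f₀ = (P ^ k) *ᵥ (∑ i, c i • ⇑(b i)) := by rw [← hrepr]
      _ = ∑ i, (P ^ k) *ᵥ (c i • ⇑(b i)) := by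
          simp only [← Matrix.mulVecLin_apply]
          exact map_sum ((P ^ k).mulVecLin) _ _
      _ = ∑ i, ((μ i) ^ k * c i) • ⇑(b i) := by
          refine Finset.sum_congr rfl fun i _ => ?_
          rw [Matrix.mulVec_smul, hpowb i k, smul_smul, mul_comm]
  -- orthogonality of non-unit eigenvectors to u
  have horthu : ∀ i, μ i ≠ 1 → ⇑(b i) ⬝ᵥ u = 0 := by
    intro i hne
    have h1 : (P *ᵥ ⇑(b i)) ⬝ᵥ u = ⇑(b i) ⬝ᵥ (P *ᵥ u) := hsymdot _ _
    rw [hPu, heig i, smul_dotProduct] at h1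
    have h2 : (μ i - 1) * (⇑(b i) ⬝ᵥ u) = 0 := by
      simp only [smul_eq_mul] at h1
      linarith
    rcases mul_eq_zero.1 h2 with h | h
    · exact absurd (by linarith : μ i = 1) hne
    · exact h
  -- representation of u
  set U : EuclideanSpace ℝ (Fin n) := (WithLp.equiv 2 (Fin n → ℝ)).symm u with hU_def
  have hcU : ∀ i, b.repr U i = ⇑(b i) ⬝ᵥ u := by
    intro i
    rw [b.repr_apply_apply]
    simp [PiLp.inner_apply, dotProduct, mul_comm]
    rfl
  have hurepr : u = ∑ i, (⇑(b i) ⬝ᵥ u) • ⇑(b i) := by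
    have h : (⇑U : Fin n → ℝ) = ∑ i, b.repr U i • ⇑(b i) := by
      conv_lhs => rw [← b.sum_repr U]
      rw [WithLp.ofLp_sum]; rfl
    simp only [hcU] at h
    exact h
  -- existence of the unit eigenvalue
  have hex : ∃ i₀, μ i₀ = 1 := by
    by_contra hno
    push_neg at hno
    have h1 : u = 0 := by
      rw [hurepr]
      refine Finset.sum_eq_zero fun i _ => ?_
      rw [horthu i (hno i), zero_smul]
    have h2 : u ⟨0, hn⟩ > 0 := by
      rw [hus]
      exact hspos _
    rw [h1] at h2
    simp at h2
  obtain ⟨i₀, hμ₀⟩ := hex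
  obtain ⟨t, ht0, hbt⟩ := hmult i₀ hμ₀
  have huudot : ∀ w : Fin n → ℝ, (fun j => t * u j) ⬝ᵥ w = t * (u ⬝ᵥ w) := by
    intro w
    simp only [dotProduct, Finset.mul_sum]
    exact Finset.sum_congr rfl fun j _ => by ring
  have hbt' : ⇑(b i₀) = fun j => t * u j := funext hbt
  have ht2 : t * t * (u ⬝ᵥ u) = 1 := by
    have h1 := hbdot1 i₀
    rw [hbt'] at h1
    rw [huudot] at h1
    have h2 : u ⬝ᵥ (fun j => t * u j) = t * (u ⬝ᵥ u) := by
      simp only [dotProduct, Finset.mul_sum]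
      exact Finset.sum_congr rfl fun j _ => by ring
    rw [h2] at h1
    linarith [h1]
  have huu0 : u ⬝ᵥ u ≠ 0 := by
    intro h
    rw [h, mul_zero] at ht2
    norm_num at ht2
  -- uniqueness: no other index has eigenvalue 1
  have huniq : ∀ i, i ≠ i₀ → μ i ≠ 1 := by
    intro i hne h1
    obtain ⟨t', ht0', hbt2⟩ := hmult i h1
    have hbt2' : ⇑(b i) = fun j => t' * u j := funext hbt2
    have h2 : (fun j => t' * u j) ⬝ᵥ (fun j => t * u j) = 0 := by
      rw [← hbt2', ← hbt']
      exact hbdot i i₀ hne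
    have h3 : (fun j => t' * u j) ⬝ᵥ (fun j => t * u j) = t' * t * (u ⬝ᵥ u) := by
      simp only [dotProduct, Finset.mul_sum]
      exact Finset.sum_congr rfl fun j _ => by ring
    rw [h3] at h2
    rcases mul_eq_zero.1 h2 with h | h
    · rcases mul_eq_zero.1 h with h' | h'
      · exact ht0' h'
      · exact ht0 h'
    · exact huu0 h
  -- the limit
  set L : Fin n → ℝ := ∑ i, (if μ i = 1 then c i else 0) • ⇑(b i) with hL_def
  have hLval : L = ((u ⬝ᵥ f₀) / (u ⬝ᵥ u)) • u := by
    have h1 : L = c i₀ • ⇑(b i₀) := by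
      rw [hL_def]
      rw [Finset.sum_eq_single i₀]
      · rw [if_pos hμ₀]
      · intro i _ hne
        rw [if_neg (huniq i hne), zero_smul]
      · intro h
        exact absurd (Finset.mem_univ i₀) h
    have hc₀ : c i₀ = t * (u ⬝ᵥ f₀) := by
      rw [hc_def]
      simp only
      rw [b.repr_apply_apply]
      have : (inner ℝ (b i₀) F : ℝ) = ⇑(b i₀) ⬝ᵥ f₀ := by
        simp [PiLp.inner_apply, dotProduct, mul_comm]
        rfl
      rw [this, hbt', huudot]
    rw [h1, hc₀, hbt']
    funext j
    simp only [Pi.smul_apply, smul_eq_mul]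
    field_simp
    linear_combination (u ⬝ᵥ f₀ * u j) * ht2
  -- conclude
  have hgoal : Tendsto (fun k : ℕ => ∑ i, ((μ i) ^ k * c i) • ⇑(b i)) atTop (nhds L) := by
    rw [hL_def]
    refine tendsto_finset_sum _ fun i _ => ?_
    by_cases h : μ i = 1
    · rw [h, if_pos rfl]
      simp only [one_pow, one_mul]
      exact tendsto_const_nhds
    · rw [if_neg h]
      have h1 : Tendsto (fun k : ℕ => (μ i) ^ k * c i) atTop (nhds (0 * c i)) :=
        (tendsto_pow_atTop_nhds_zero_of_abs_lt_one (hbounds i h)).mul_const (c i)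
      have h2 := h1.smul_const (⇑(b i))
      rw [zero_mul] at h2
      simpa using h2
  rw [← hLval]
  simp only [hPk]
  exact hgoal
end
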